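/- Let n = 30, β = 2π/30, and A_j = exp(iβj) ∈ ℂ (indices modulo 30) the vertices of the regular 30-gon inscribed in the unit circle. Then the three diagonals A_0A_8, A_1A_9, and A_5A_22 are concurrent: there exists a point of ℂ lying on all three lines. Equivalently, the intersection point φ_8(A_1) = (cos(8β/2)/cos(β/2))·exp(i·7β/2)·exp(iβ) of the consecutive 8-th diagonals A_0A_8 and A_1A_9 lies on the line through A_5 and A_22. (This sporadic extra incidence is why K(30;8,12), K(30;8,13), K(30;12,13) fail to be (90_4) configurations.) -/

import Mathlib

open Real

/-- A point `p` lies on the real affine line through `a` and `b` as soon as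
`(p - a) * conj (b - a)` is self-conjugate. -/
lemma on_line_aux {a b p : ℂ} (hab : b - a ≠ 0)
    (h : (p - a) * (starRingEnd ℂ) (b - a) = (starRingEnd ℂ) (p - a) * (b - a)) :
    ∃ t : ℝ, p = a + t • (b - a) := by
  refine ⟨((p - a) / (b - a)).re, ?_⟩
  have hcb : (starRingEnd ℂ) (b - a) ≠ 0 := fun h =>
    hab (by simpa using congrArg (starRingEnd ℂ) h)
  have hc : (starRingEnd ℂ) ((p - a) / (b - a)) = (p - a) / (b - a) := by
    rw [map_div₀, div_eq_div_iff hcb hab]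
    exact h.symm
  have hre : ((((p - a) / (b - a)).re : ℝ) : ℂ) = (p - a) / (b - a) :=
    Complex.conj_eq_iff_re.mp hc
  rw [Complex.real_smul, hre, div_mul_cancel₀ _ hab]
  ring

/-- in the regular 30-gon the three diagonals
`A 0 A 8`, `A 1 A 9` and `A 5 A 22` are concurrent:
some point of ℂ lies on all three lines.  (Sporadic extra incidence behind K(30;8,12), K(30;8,13), K(30;12,13).) -/
theorem stmt_11 (β : ℝ) (hβ : β = 2 * π / 30)
    (A : ℤ → ℂ) (hA : ∀ j : ℤ, A j = Complex.exp ((β * j : ℝ) * Complex.I)) :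
    ∃ p : ℂ,
      (∃ t : ℝ, p = A 0 + t • (A 8 - A 0)) ∧
      (∃ t : ℝ, p = A 1 + t • (A 9 - A 1)) ∧
      (∃ t : ℝ, p = A 5 + t • (A 22 - A 5)) := by
  subst hβ
  obtain ⟨η, hη⟩ : ∃ η : ℂ, η = Complex.exp ((π / 30 : ℝ) * Complex.I) := ⟨_, rfl⟩
  have hηne : η ≠ 0 := by rw [hη]; exact Complex.exp_ne_zero _
  -- η is a 60-th root of unity
  have h60 : η ^ 60 = 1 := by
    rw [hη, ← Complex.exp_nat_mul]
    rw [show ((60 : ℕ) : ℂ) * ((π / 30 : ℝ) * Complex.I) = 2 * π * Complex.I by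
      push_cast; ring]
    exact Complex.exp_two_pi_mul_I
  have hpow' : ∀ m : ℕ, η ^ m = η ^ (m % 60) := by
    intro m
    conv_lhs => rw [← Nat.div_add_mod m 60]
    rw [pow_add, pow_mul, h60, one_pow, one_mul]
  -- η is a primitive 60-th root of unity
  have hne_one : ∀ m : ℕ, 0 < m → m < 60 → η ^ m ≠ 1 := by
    intro m hm1 hm2 h
    rw [hη, ← Complex.exp_nat_mul, Complex.exp_eq_one_iff] at h
    obtain ⟨n, hn⟩ := h
    have hIm : (((m : ℝ) * (π / 30) : ℝ) : ℂ) * Complex.I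
        = (((n : ℝ) * (2 * π) : ℝ) : ℂ) * Complex.I := by
      push_cast
      push_cast at hn
      linear_combination hn
    have hI : Complex.I ≠ 0 := Complex.I_ne_zero
    have hr : (m : ℝ) * (π / 30) = (n : ℝ) * (2 * π) :=
      Complex.ofReal_inj.mp (mul_right_cancel₀ hI hIm)
    have hπ : (π : ℝ) ≠ 0 := ne_of_gt Real.pi_pos
    have hr2 : ((m : ℝ) / 30) * π = ((n : ℝ) * 2) * π := by linear_combination hr
    have hr3 : (m : ℝ) / 30 = (n : ℝ) * 2 := mul_right_cancel₀ hπ hr2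
    have hr4 : (m : ℝ) = 60 * (n : ℝ) := by linarith
    have hr5 : (m : ℤ) = 60 * n := by exact_mod_cast hr4
    omega
  -- conjugation on powers of η
  have hconj : (starRingEnd ℂ) η = η ^ 59 := by
    have hmul : η * (starRingEnd ℂ) η = 1 := by
      rw [hη, ← Complex.exp_conj, ← Complex.exp_add]
      rw [show ((π / 30 : ℝ) : ℂ) * Complex.I
          + (starRingEnd ℂ) (((π / 30 : ℝ) : ℂ) * Complex.I) = 0 by
        rw [map_mul, Complex.conj_ofReal, Complex.conj_I]; ring]
      exact Complex.exp_zero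
    have hmul2 : η * η ^ 59 = 1 := by
      rw [← pow_succ']; exact h60
    exact mul_left_cancel₀ hηne (hmul.trans hmul2.symm)
  have hcpow : ∀ m : ℕ, (starRingEnd ℂ) (η ^ m) = η ^ (59 * m % 60) := by
    intro m
    rw [map_pow, hconj, ← pow_mul, hpow']
  -- basic nonvanishing facts
  have hd2 : η ^ 2 + 1 ≠ 0 := by
    intro h
    apply hne_one 4 (by norm_num) (by norm_num)
    linear_combination (η ^ 2 - 1) * h
  have hd58 : η ^ 58 + 1 ≠ 0 := by
    intro h
    apply hd2
    have h2 : η ^ 58 * (η ^ 2 + 1) = 0 := by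
      linear_combination h + h60
    rcases mul_eq_zero.mp h2 with h3 | h3
    · exact absurd h3 (pow_ne_zero _ hηne)
    · exact h3
  -- the cyclotomic relation Φ₆₀(η) = 0
  have h30 : η ^ 30 = -1 := by
    have hfac : (η ^ 30 - 1) * (η ^ 30 + 1) = 0 := by linear_combination h60
    rcases mul_eq_zero.mp hfac with h | h
    · exact absurd (sub_eq_zero.mp h) (hne_one 30 (by norm_num) (by norm_num))
    · linear_combination h
  have h3 : η ^ 40 + η ^ 20 + 1 = 0 := by
    have hfac : (η ^ 20 - 1) * (η ^ 40 + η ^ 20 + 1) = 0 := by linear_combination h60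
    rcases mul_eq_zero.mp hfac with h | h
    · exact absurd (sub_eq_zero.mp h) (hne_one 20 (by norm_num) (by norm_num))
    · exact h
  have h5 : η ^ 48 + η ^ 36 + η ^ 24 + η ^ 12 + 1 = 0 := by
    have hfac : (η ^ 12 - 1) * (η ^ 48 + η ^ 36 + η ^ 24 + η ^ 12 + 1) = 0 := by
      linear_combination h60
    rcases mul_eq_zero.mp hfac with h | h
    · exact absurd (sub_eq_zero.mp h) (hne_one 12 (by norm_num) (by norm_num))
    · exact h
  have hΦ : η ^ 16 + η ^ 14 - η ^ 10 - η ^ 8 - η ^ 6 + η ^ 2 + 1 = 0 := by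
    linear_combination (η ^ 40 + η ^ 30 + η ^ 28 + η ^ 18 + η ^ 16 - η ^ 10) * h30
      + (1 - η ^ 30 - η ^ 20 - η ^ 18 - η ^ 8 - η ^ 6) * h3 + η ^ 2 * h5
  -- the vertices
  have hAv : ∀ (j : ℤ) (m : ℕ), 2 * (j : ℝ) = (m : ℝ) → A j = η ^ m := by
    intro j m hm
    rw [hA, hη, ← Complex.exp_nat_mul]
    congr 1
    have hr : (2 * π / 30) * (j : ℝ) = (m : ℝ) * (π / 30) := by
      push_cast at hm
      linear_combination (π / 30) * hm
    rw [show ((2 * π / 30 * (j : ℝ) : ℝ) : ℂ) = (((m : ℝ) * (π / 30) : ℝ) : ℂ) from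
      Complex.ofReal_inj.mpr hr]
    push_cast
    ring
  have hA0 : A 0 = η ^ 0 := hAv 0 0 (by norm_num)
  have hA1 : A 1 = η ^ 2 := hAv 1 2 (by norm_num)
  have hA5 : A 5 = η ^ 10 := hAv 5 10 (by norm_num)
  have hA8 : A 8 = η ^ 16 := hAv 8 16 (by norm_num)
  have hA9 : A 9 = η ^ 18 := hAv 9 18 (by norm_num)
  have hA22 : A 22 = η ^ 44 := hAv 22 44 (by norm_num)
  -- the intersection point
  set p : ℂ := (η ^ 18 + η ^ 2) / (η ^ 2 + 1) with hp
  have hcp : (starRingEnd ℂ) p = (η ^ 44 + 1) / (η ^ 2 + 1) := by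
    rw [hp, map_div₀, map_add, map_add, map_one, hcpow, hcpow]
    norm_num
    rw [div_eq_div_iff hd58 hd2]
    linear_combination (1 - η ^ 42) * h60
  -- generic line-membership step
  have main : ∀ da db ca cb : ℕ, η ^ db - η ^ da ≠ 0 →
      59 * da % 60 = ca → 59 * db % 60 = cb →
      ((η ^ 18 + η ^ 2) - (η ^ 2 + 1) * η ^ da) * (η ^ cb - η ^ ca)
        = ((η ^ 44 + 1) - (η ^ 2 + 1) * η ^ ca) * (η ^ db - η ^ da) →
      ∃ t : ℝ, p = η ^ da + t • (η ^ db - η ^ da) := by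
    intro da db ca cb hne hca hcb key
    apply on_line_aux hne
    rw [map_sub, map_sub, hcp, hcpow, hcpow, hca, hcb, hp]
    rw [div_sub' hd2, div_sub' hd2,
      div_mul_eq_mul_div, div_mul_eq_mul_div, key]
  -- nondegeneracy of the three chords
  have hne1 : η ^ 16 - η ^ 0 ≠ 0 := by
    rw [pow_zero]
    exact sub_ne_zero.mpr (hne_one 16 (by norm_num) (by norm_num))
  have hne2' : η ^ 18 - η ^ 2 ≠ 0 := by
    intro h
    apply hne_one 16 (by norm_num) (by norm_num)
    have h2 : η ^ 2 * (η ^ 16 - 1) = 0 := by linear_combination h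
    rcases mul_eq_zero.mp h2 with h3 | h3
    · exact absurd h3 (pow_ne_zero _ hηne)
    · exact sub_eq_zero.mp h3
  have hne3 : η ^ 44 - η ^ 10 ≠ 0 := by
    intro h
    apply hne_one 34 (by norm_num) (by norm_num)
    have h2 : η ^ 10 * (η ^ 34 - 1) = 0 := by linear_combination h
    rcases mul_eq_zero.mp h2 with h3 | h3
    · exact absurd h3 (pow_ne_zero _ hηne)
    · exact sub_eq_zero.mp h3
  refine ⟨p, ?_, ?_, ?_⟩
  · rw [hA0, hA8]
    refine main 0 16 0 44 hne1 (by norm_num) (by norm_num) ?_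
    linear_combination (η ^ 46 - 2 * η ^ 44 + 2 * η ^ 42 - η ^ 40 + η ^ 36 - 2 * η ^ 34
      + 2 * η ^ 32 - η ^ 30 - η ^ 16 + 2 * η ^ 14 - 2 * η ^ 12 + η ^ 10 - η ^ 6
      + 2 * η ^ 4 - 2 * η ^ 2 + 1) * hΦ
  · rw [hA1, hA9]
    refine main 2 18 58 42 hne2' (by norm_num) (by norm_num) ?_
    linear_combination (η ^ 62 - η ^ 60 + η ^ 58 + η ^ 52 - η ^ 50 + η ^ 48 - η ^ 46
      + η ^ 44 - η ^ 42 - η ^ 36 + η ^ 34 - 2 * η ^ 32 + η ^ 30 - η ^ 28 - η ^ 22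
      + η ^ 20 - η ^ 18 + η ^ 16 - η ^ 14 + η ^ 12 + η ^ 6 - η ^ 4 + η ^ 2) * hΦ
  · rw [hA5, hA22]
    refine main 10 44 50 16 hne3 (by norm_num) (by norm_num) ?_
    linear_combination (η ^ 80 + η ^ 74 - η ^ 72 + 2 * η ^ 70 - η ^ 68 + η ^ 64 - η ^ 62
      + η ^ 60 - η ^ 58 - η ^ 52 - η ^ 48 - η ^ 44 - η ^ 40 + η ^ 38 - 2 * η ^ 36
      + η ^ 34 - η ^ 30 + η ^ 28 - η ^ 26 + η ^ 24 + η ^ 18 + η ^ 14 - η ^ 12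
      + η ^ 10) * hΦ
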